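/- Let n = 2m+1 be odd with m ≥ 0. Then there is an isomorphism of representations of G: Symⁿρ ≅ ⨁_{i=0}^{m} (Ind_H^G η^{n−2i}) ⊗ (θ·det ρ)^{i}. In particular, no one-dimensional summand occurs in Symⁿρ for odd n. -/
import Mathlib


open Matrix MvPolynomial
open scoped Classical

/-- Extension of a character `η : H →* Kˣ` to all of `G`, by zero outside `H`. -/
noncomputable def etaExt {K : Type*} [Field K] {G : Type*} [Group G]
    (H : Subgroup G) (η : H →* Kˣ) (g : G) : K :=
  if h : g ∈ H then ((η ⟨g, h⟩ : Kˣ) : K) else 0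

/-- The matrix model of the induced representation `Ind_H^G η'` (for any
character `η'` of `H`). -/
noncomputable def indRep {K : Type*} [Field K] {G : Type*} [Group G]
    (H : Subgroup G) (η : H →* Kˣ) (τ : G) (g : G) : Matrix (Fin 2) (Fin 2) K :=
  if g ∈ H then
    !![etaExt H η g, 0; 0, etaExt H η (τ * g * τ⁻¹)]
  else
    !![0, etaExt H η (g * τ⁻¹); etaExt H η (τ * g), 0]

/-- The substitution action of a 2×2 matrix on polynomials in `x = X 0`,
`y = X 1`, realizing the symmetric powers on homogeneous polynomials. -/
noncomputable def symAct {K : Type*} [Field K] (A : Matrix (Fin 2) (Fin 2) K) :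
    MvPolynomial (Fin 2) K →ₐ[K] MvPolynomial (Fin 2) K :=
  MvPolynomial.aeval (fun i => ∑ j, MvPolynomial.C (A j i) * MvPolynomial.X j)

/-- The character `θ · det ρ`, equal to `η(g)η(τgτ⁻¹)` on `H` and
`η(τg)η(gτ⁻¹)` off `H`. -/
noncomputable def thetaDet {K : Type*} [Field K] {G : Type*} [Group G]
    (H : Subgroup G) (η : H →* Kˣ) (τ : G) (g : G) : K :=
  if g ∈ H then etaExt H η g * etaExt H η (τ * g * τ⁻¹)
  else etaExt H η (τ * g) * etaExt H η (g * τ⁻¹)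


lemma etaExt_pow' {K : Type*} [Field K] {G : Type*} [Group G]
    (H : Subgroup G) (η : H →* Kˣ) (k : ℕ) (g : G) (hg : g ∈ H) :
    etaExt H (η ^ k) g = etaExt H η g ^ k := by
  simp [etaExt, hg]

lemma symAct_diag' {K : Type*} [Field K] (a d : K) (p q : ℕ) :
    symAct !![a, 0; 0, d] (X 0 ^ p * X 1 ^ q) = C (a ^ p * d ^ q) * (X 0 ^ p * X 1 ^ q) := by
  simp [symAct, Fin.sum_univ_two, mul_pow]
  ring

lemma symAct_anti' {K : Type*} [Field K] (b c : K) (p q : ℕ) :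
    symAct !![0, c; b, 0] (X 0 ^ p * X 1 ^ q) = C (b ^ p * c ^ q) * (X 0 ^ q * X 1 ^ p) := by
  simp [symAct, Fin.sum_univ_two, mul_pow]
  ring

/-- for odd `n = 2m + 1`,
`Symⁿρ ≅ ⨁_{i=0}^{m} (Ind_H^G η^(n-2i)) ⊗ (θ·det ρ)^i`: for each `0 ≤ i ≤ m`
the plane spanned by `v i = x^(n-i) y^i` and `v (n-i) = x^i y^(n-i)`, via the
basis `(v i, v (n-i)) ↔ (e₀, e₁)`, carries `(Ind_H^G η^(n-2i)) ⊗ (θ·det ρ)^i`;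
these planes exhaust the basis `v 0, …, v n`, so every summand is
two-dimensional and no one-dimensional summand occurs. -/
theorem symPow_odd_decomposition
    {K : Type*} [Field K] [CharZero K] {G : Type*} [Group G]
    (H : Subgroup G) (hH : H.index = 2) (τ : G) (hτ : τ ∉ H) (η : H →* Kˣ)
    (m : ℕ) :
    ∀ g : G, ∀ i : ℕ, i ≤ m →
      (symAct (indRep H η τ g) (X 0 ^ (2 * m + 1 - i) * X 1 ^ i) =
        C (thetaDet H η τ g ^ i) *
          (C (indRep H (η ^ (2 * m + 1 - 2 * i)) τ g 0 0) *
              (X 0 ^ (2 * m + 1 - i) * X 1 ^ i) +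
           C (indRep H (η ^ (2 * m + 1 - 2 * i)) τ g 1 0) *
              (X 0 ^ i * X 1 ^ (2 * m + 1 - i)))) ∧
      (symAct (indRep H η τ g) (X 0 ^ i * X 1 ^ (2 * m + 1 - i)) =
        C (thetaDet H η τ g ^ i) *
          (C (indRep H (η ^ (2 * m + 1 - 2 * i)) τ g 0 1) *
              (X 0 ^ (2 * m + 1 - i) * X 1 ^ i) +
           C (indRep H (η ^ (2 * m + 1 - 2 * i)) τ g 1 1) *
              (X 0 ^ i * X 1 ^ (2 * m + 1 - i)))) := by
  intro g i hi
  have h1 : 2 * m + 1 - i = (2 * m + 1 - 2 * i) + i := by omega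
  by_cases hg : g ∈ H
  · have hg' : τ * g * τ⁻¹ ∈ H := by
      rw [Subgroup.mul_mem_iff_of_index_two hH, Subgroup.mul_mem_iff_of_index_two hH]
      simp [hτ, hg]
    set a := etaExt H η g with ha
    set d := etaExt H η (τ * g * τ⁻¹) with hd
    have hsc : ∀ u v : K, u ^ (2 * m + 1 - i) * v ^ i =
        (u * v) ^ i * u ^ (2 * m + 1 - 2 * i) := by
      intro u v
      rw [h1, pow_add, mul_pow]; ring
    simp only [indRep, thetaDet, if_pos hg, ← ha, ← hd,
      etaExt_pow' H η _ g hg, etaExt_pow' H η _ _ hg',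
      Matrix.cons_val', Matrix.cons_val_zero, Matrix.cons_val_one,
      Matrix.head_cons, Matrix.empty_val', Matrix.cons_val_fin_one,
      Matrix.head_fin_const]
    rw [symAct_diag', symAct_diag']
    constructor
    · rw [hsc a d]
      simp [mul_pow, mul_comm, mul_assoc, mul_left_comm]
    · rw [mul_comm (a ^ i), hsc d a]
      simp [mul_pow, mul_comm, mul_assoc, mul_left_comm]
  · have hτg : τ * g ∈ H := by
      rw [Subgroup.mul_mem_iff_of_index_two hH]; simp [hτ, hg]
    have hgτ : g * τ⁻¹ ∈ H := by
      rw [Subgroup.mul_mem_iff_of_index_two hH]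
      simp [hg, hτ, Subgroup.inv_mem_iff]
    set b := etaExt H η (τ * g) with hb
    set c := etaExt H η (g * τ⁻¹) with hc
    have hsc : ∀ u v : K, u ^ (2 * m + 1 - i) * v ^ i =
        (u * v) ^ i * u ^ (2 * m + 1 - 2 * i) := by
      intro u v
      rw [h1, pow_add, mul_pow]; ring
    simp only [indRep, thetaDet, if_neg hg, ← hb, ← hc,
      etaExt_pow' H η _ _ hτg, etaExt_pow' H η _ _ hgτ,
      Matrix.cons_val', Matrix.cons_val_zero, Matrix.cons_val_one,
      Matrix.head_cons, Matrix.empty_val', Matrix.cons_val_fin_one,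
      Matrix.head_fin_const]
    rw [symAct_anti', symAct_anti']
    constructor
    · rw [hsc b c, mul_comm b c]
      simp [mul_pow, mul_comm, mul_assoc, mul_left_comm]
    · rw [mul_comm (b ^ i), hsc c b]
      simp [mul_pow, mul_comm, mul_assoc, mul_left_comm]
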